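/- For c ∈ [0, 1/2), let a_1 = (2 + c - √(3+2c))/2, δ_1 = ((1-2a_1-c)/(1+c) + √(a_1))/√(1-a_1), and λ_1 = (1 + δ_1^2)^{-1/2}. Then λ_1 = (c+1)·(4√(2c+3)·c + 6√(2c+3) - 10c - 8)^{-1/2}. -/

import Mathlib

/-- Consistency constant for c ∈ [0,1/2):
λ₁ = (c+1)·(4√(2c+3)c + 6√(2c+3) - 10c - 8)^{-1/2}. -/
theorem stmt13 (c : ℝ) (hc : c ∈ Set.Ico (0:ℝ) (1/2)) :
    let a : ℝ := (2 + c - Real.sqrt (3 + 2*c)) / 2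
    let δ : ℝ := ((1 - 2*a - c)/(1+c) + Real.sqrt a) / Real.sqrt (1-a)
    let lam : ℝ := (1 + δ^2) ^ (-(1:ℝ)/2)
    lam = (c+1) *
      (4*Real.sqrt (2*c+3)*c + 6*Real.sqrt (2*c+3) - 10*c - 8) ^ (-(1:ℝ)/2) := by
  obtain ⟨hc0, hc1⟩ := hc
  intro a δ lam
  set s : ℝ := Real.sqrt (3 + 2*c) with hs
  have hs2 : s^2 = 3 + 2*c := Real.sq_sqrt (by linarith)
  have hs0 : 0 ≤ s := Real.sqrt_nonneg _
  have hs1 : 1 < s := by nlinarith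
  have hsc : c < s := by linarith
  have hs23 : Real.sqrt (2*c+3) = s := by rw [hs]; ring_nf
  -- √a = (s-1)/2
  have ha : a = ((s-1)/2)^2 := by simp only [a]; nlinarith
  have hsa : Real.sqrt a = (s-1)/2 := by
    rw [ha, Real.sqrt_sq (by linarith)]
  -- 1 - a = (s-c)/2
  have h1a : 1 - a = (s-c)/2 := by simp only [a]; ring
  set t : ℝ := Real.sqrt (1-a) with htdef
  have ht0 : 0 < t := Real.sqrt_pos.mpr (by rw [h1a]; linarith)
  have ht2 : t^2 = (s-c)/2 := by rw [htdef, Real.sq_sqrt (by rw [h1a]; linarith), h1a]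
  have hc1' : (0:ℝ) < 1 + c := by linarith
  have hδ : δ = ((3+c)*s - (3+5*c)) / (2*(1+c)*t) := by
    simp only [δ, hsa, ← htdef, a]
    field_simp
    ring
  set X : ℝ := 4*s*c + 6*s - 10*c - 8 with hX
  have hXpos : 0 < X := by nlinarith
  have hsc' : s - c ≠ 0 := by linarith
  have key : 1 + δ^2 = X / (c+1)^2 := by
    rw [hδ, div_pow, mul_pow, mul_pow, ht2]
    field_simp
    linear_combination (2*(c+1)^2*(3+c)^2 - 8*(c+1)^2*(2*c+3) + (3+8*c+6*c^2-c^4)) * hs2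
  have hrp : ∀ x:ℝ, 0 ≤ x → x ^ (-(1:ℝ)/2) = (Real.sqrt x)⁻¹ := by
    intro x hx
    rw [show (-(1:ℝ)/2) = -(1/2) by ring, Real.rpow_neg hx, ← Real.sqrt_eq_rpow]
  have hXdiv : (0:ℝ) ≤ X / (c+1)^2 := by positivity
  have hgoal : lam = (1 + δ^2) ^ (-(1:ℝ)/2) := rfl
  rw [hgoal, key, hs23, ← hX, hrp _ hXdiv, hrp _ hXpos.le,
    Real.sqrt_div hXpos.le, Real.sqrt_sq (by linarith : (0:ℝ) ≤ c+1)]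
  have hsX : Real.sqrt X ≠ 0 := by positivity
  field_simp
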